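/- For every object x of C and every short exact sequence 0 → F → G → H → 0 in Fct(C, A), there exists a connecting morphism κ_x(H) → δ_x(F) making the six-term sequence 0 → κ_x(F) → κ_x(G) → κ_x(H) → δ_x(F) → δ_x(G) → δ_x(H) → 0 exact in Fct(C, A), where the morphisms κ_x(F) → κ_x(G), κ_x(G) → κ_x(H), δ_x(F) → δ_x(G) and δ_x(G) → δ_x(H) are those obtained by applying the functors κ_x and δ_x to the morphisms of the given short exact sequence. -/

import Mathlib

open CategoryTheory CategoryTheory.Limits CategoryTheory.MonoidalCategory

variable {C : Type*} [Category C] [MonoidalCategory C]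
variable {A : Type*} [Category A] [Abelian A]

/-- The translation endofunctor `τ_x` of `Fct(C, A)`: precomposition with `x ⊗ -`. -/
noncomputable def tauF (A : Type*) [Category A] (x : C) : (C ⥤ A) ⥤ (C ⥤ A) :=
  (Functor.whiskeringLeft C C A).obj (tensorLeft x)

/-- The component `i_x(F) : F ⟶ τ_x F`, whose component at `c` is
`F` applied to `c ≅ 𝟙 ⊗ c ⟶ x ⊗ c`. -/
def iApp (hI : IsInitial (𝟙_ C)) (x : C) (F : C ⥤ A) : F ⟶ tensorLeft x ⋙ F where
  app c := F.map ((λ_ c).inv ≫ hI.to x ▷ c)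
  naturality c c' f := by
    dsimp
    rw [← F.map_comp, ← F.map_comp]
    congr 1
    rw [leftUnitor_inv_naturality_assoc, whisker_exchange, Category.assoc]

/-- The natural transformation `i_x : Id ⟶ τ_x` of endofunctors of `Fct(C, A)`. -/
noncomputable def iNT (hI : IsInitial (𝟙_ C)) (x : C) :
    𝟭 (C ⥤ A) ⟶ tauF A x where
  app F := iApp hI x F
  naturality F G η := by
    ext c
    exact (η.naturality _).symm

/-- The evanescence endofunctor `κ_x = ker(i_x)` of `Fct(C, A)`. -/
noncomputable def kappaF (hI : IsInitial (𝟙_ C)) (x : C) : (C ⥤ A) ⥤ (C ⥤ A) :=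
  kernel (iNT (A := A) hI x)

/-- The difference endofunctor `δ_x = coker(i_x)` of `Fct(C, A)`. -/
noncomputable def deltaF (hI : IsInitial (𝟙_ C)) (x : C) : (C ⥤ A) ⥤ (C ⥤ A) :=
  cokernel (iNT (A := A) hI x)

/-- For every short exact sequence `0 → F → G → H → 0` in `Fct(C, A)` there is a
connecting morphism `κ_x(H) → δ_x(F)` making the six-term sequence
`0 → κ_x F → κ_x G → κ_x H → δ_x F → δ_x G → δ_x H → 0` exact. -/
theorem six_term_exact_sequence_of_shortExact
    (hI : IsInitial (𝟙_ C)) (x : C)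
    (S : ShortComplex (C ⥤ A)) (hS : S.ShortExact) :
    ∃ (conn : (kappaF hI x).obj S.X₃ ⟶ (deltaF hI x).obj S.X₁)
      (w₁ : (kappaF hI x).map S.f ≫ (kappaF hI x).map S.g = 0)
      (w₂ : (kappaF hI x).map S.g ≫ conn = 0)
      (w₃ : conn ≫ (deltaF hI x).map S.f = 0)
      (w₄ : (deltaF hI x).map S.f ≫ (deltaF hI x).map S.g = 0),
      Mono ((kappaF hI x).map S.f) ∧
      (ShortComplex.mk _ _ w₁).Exact ∧
      (ShortComplex.mk _ _ w₂).Exact ∧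
      (ShortComplex.mk _ _ w₃).Exact ∧
      (ShortComplex.mk _ _ w₄).Exact ∧
      Epi ((deltaF hI x).map S.g) := by

  classical
  -- Notation
  set η := iNT (A := A) hI x with hη
  have hf : Mono S.f := hS.mono_f
  have hg : Epi S.g := hS.epi_g
  -- pointwise kernel forks
  have kw : ∀ F : C ⥤ A, (kernel.ι η).app F ≫ η.app F = 0 := fun F => by
    rw [← NatTrans.comp_app, kernel.condition]; rfl
  have hker : ∀ F : C ⥤ A, IsLimit (KernelFork.ofι ((kernel.ι η).app F) (kw F)) := fun F =>
    KernelFork.mapIsLimit _ (kernelIsKernel η) ((evaluation (C ⥤ A) (C ⥤ A)).obj F)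
  have cw : ∀ F : C ⥤ A, η.app F ≫ (cokernel.π η).app F = 0 := fun F => by
    rw [← NatTrans.comp_app, cokernel.condition]; rfl
  have hcoker : ∀ F : C ⥤ A, IsColimit (CokernelCofork.ofπ ((cokernel.π η).app F) (cw F)) :=
    fun F =>
    CokernelCofork.mapIsColimit _ (cokernelIsCokernel η) ((evaluation (C ⥤ A) (C ⥤ A)).obj F)
  have mono_ι : ∀ F : C ⥤ A, Mono ((kernel.ι η).app F) := fun F =>
    mono_of_isLimit_fork (hker F)
  have epi_π : ∀ F : C ⥤ A, Epi ((cokernel.π η).app F) := fun F =>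
    epi_of_isColimit_cofork (hcoker F)
  -- naturality helpers
  have natκ : ∀ {F G : C ⥤ A} (φ : F ⟶ G),
      (kappaF hI x).map φ ≫ (kernel.ι η).app G = (kernel.ι η).app F ≫ φ := fun φ =>
    (kernel.ι η).naturality φ
  have natδ : ∀ {F G : C ⥤ A} (φ : F ⟶ G),
      (tauF A x).map φ ≫ (cokernel.π η).app G = (cokernel.π η).app F ≫ (deltaF hI x).map φ :=
    fun φ => (cokernel.π η).naturality φ
  -- the four rows
  haveI hτ0 : Functor.PreservesZeroMorphisms (tauF A x) := by
    constructor
    intro F G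
    ext c
    simp [tauF]
    rfl
  have L₀zero : (kappaF hI x).map S.f ≫ (kappaF hI x).map S.g = 0 := by
    have := mono_ι S.X₃
    erw [← cancel_mono ((kernel.ι η).app S.X₃), Category.assoc, natκ S.g, ← Category.assoc,
      natκ S.f, Category.assoc, S.zero, comp_zero, zero_comp]
  have L₂zero : (tauF A x).map S.f ≫ (tauF A x).map S.g = 0 := by
    rw [← Functor.map_comp, S.zero, hτ0.map_zero]
  have L₃zero : (deltaF hI x).map S.f ≫ (deltaF hI x).map S.g = 0 := by
    have := epi_π S.X₁
    erw [← cancel_epi ((cokernel.π η).app S.X₁), comp_zero, ← Category.assoc, ← natδ S.f,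
      Category.assoc, ← natδ S.g, ← Category.assoc, ← Functor.map_comp, S.zero, hτ0.map_zero,
      zero_comp]
  let L₀ : ShortComplex (C ⥤ A) := ShortComplex.mk _ _ L₀zero
  let L₂ : ShortComplex (C ⥤ A) := ShortComplex.mk _ _ L₂zero
  let L₃ : ShortComplex (C ⥤ A) := ShortComplex.mk _ _ L₃zero
  -- vertical maps
  let v₀₁ : L₀ ⟶ S :=
    { τ₁ := (kernel.ι η).app S.X₁
      τ₂ := (kernel.ι η).app S.X₂
      τ₃ := (kernel.ι η).app S.X₃
      comm₁₂ := (natκ S.f).symm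
      comm₂₃ := (natκ S.g).symm }
  let v₁₂ : S ⟶ L₂ :=
    { τ₁ := η.app S.X₁
      τ₂ := η.app S.X₂
      τ₃ := η.app S.X₃
      comm₁₂ := (η.naturality S.f).symm
      comm₂₃ := (η.naturality S.g).symm }
  let v₂₃ : L₂ ⟶ L₃ :=
    { τ₁ := (cokernel.π η).app S.X₁
      τ₂ := (cokernel.π η).app S.X₂
      τ₃ := (cokernel.π η).app S.X₃
      comm₁₂ := (natδ S.f).symm
      comm₂₃ := (natδ S.g).symm }
  have w₀₂ : v₀₁ ≫ v₁₂ = 0 := by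
    ext <;> exact NatTrans.congr_app (kw _) _
  have w₁₃ : v₁₂ ≫ v₂₃ = 0 := by
    ext <;> exact NatTrans.congr_app (cw _) _
  -- the snake input
  haveI : PreservesFiniteLimits (tauF A x) :=
    ⟨fun J _ _ => inferInstanceAs (PreservesLimitsOfShape J
      ((Functor.whiskeringLeft C C A).obj (tensorLeft x)))⟩
  haveI : PreservesFiniteColimits (tauF A x) :=
    ⟨fun J _ _ => inferInstanceAs (PreservesColimitsOfShape J
      ((Functor.whiskeringLeft C C A).obj (tensorLeft x)))⟩
  have hmono : Mono ((tauF A x).map S.f) := preserves_mono_of_preservesLimit (tauF A x) S.f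
  have hepi : Epi ((tauF A x).map S.g) := preserves_epi_of_preservesColimit (tauF A x) S.g
  have hSE₂ : L₂.Exact := hS.exact.map (tauF A x)
  let snk : ShortComplex.SnakeInput (C ⥤ A) :=
    { L₀ := L₀
      L₁ := S
      L₂ := L₂
      L₃ := L₃
      v₀₁ := v₀₁
      v₁₂ := v₁₂
      v₂₃ := v₂₃
      w₀₂ := w₀₂
      w₁₃ := w₁₃
      h₀ := ShortComplex.isLimitOfIsLimitπ _
        ((isLimitMapConeForkEquiv' ShortComplex.π₁ w₀₂).symm (hker S.X₁))
        ((isLimitMapConeForkEquiv' ShortComplex.π₂ w₀₂).symm (hker S.X₂))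
        ((isLimitMapConeForkEquiv' ShortComplex.π₃ w₀₂).symm (hker S.X₃))
      h₃ := ShortComplex.isColimitOfIsColimitπ _
        ((isColimitMapCoconeCoforkEquiv' ShortComplex.π₁ w₁₃).symm (hcoker S.X₁))
        ((isColimitMapCoconeCoforkEquiv' ShortComplex.π₂ w₁₃).symm (hcoker S.X₂))
        ((isColimitMapCoconeCoforkEquiv' ShortComplex.π₃ w₁₃).symm (hcoker S.X₃))
      L₁_exact := hS.exact
      epi_L₁_g := hg
      L₂_exact := hSE₂
      mono_L₂_f := hmono }
  refine ⟨snk.δ, L₀zero, snk.L₀_g_δ, snk.δ_L₃_f, L₃zero,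
    snk.mono_L₀_f, snk.L₀_exact, snk.L₁'_exact, snk.L₂'_exact, snk.L₃_exact, snk.epi_L₃_g⟩
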